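/- Let u_T : ℝⁿ → ℝ be Lipschitz. If u_T is semiconcave with linear modulus and constant 1/(T·λₙ(A)), then I_T(u_T) is nonempty. -/

import Mathlib

open scoped RealInnerProductSpace
open Filter

noncomputable section

/-- `n`-dimensional Euclidean space. -/
abbrev Euc (n : ℕ) := EuclideanSpace ℝ (Fin n)

/-- A real-valued function on `ℝⁿ` is Lipschitz (with some constant). -/
def IsLip {n : ℕ} (f : Euc n → ℝ) : Prop := ∃ K : NNReal, LipschitzWith K f

/-- The quadratic form `q ↦ ⟨M q, q⟩` associated to a matrix `M`. -/
def quadA {n : ℕ} (M : Matrix (Fin n) (Fin n) ℝ) (q : Euc n) : ℝ :=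
  ⟪(Matrix.toEuclideanLin M) q, q⟫

/-- The forward Hopf–Lax operator for the quadratic Hamiltonian `H(p) = ⟨A p, p⟩/2`:
`(S_T^+ g)(x) = inf_y [g(y) + ⟨A⁻¹(x-y), x-y⟩/(2T)]`. -/
def SplusQ {n : ℕ} (T : ℝ) (A : Matrix (Fin n) (Fin n) ℝ) (g : Euc n → ℝ) (x : Euc n) : ℝ :=
  ⨅ y : Euc n, (g y + quadA A⁻¹ (x - y) / (2 * T))

/-- The backward operator for the quadratic Hamiltonian:
`(S_T^- g)(x) = sup_y [g(y) - ⟨A⁻¹(y-x), y-x⟩/(2T)]`. -/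
def SminusQ {n : ℕ} (T : ℝ) (A : Matrix (Fin n) (Fin n) ℝ) (g : Euc n → ℝ) (x : Euc n) : ℝ :=
  ⨆ y : Euc n, (g y - quadA A⁻¹ (y - x) / (2 * T))

/-- `f` is semiconcave with linear modulus and constant `C`:
`f(x+h) + f(x-h) - 2 f(x) ≤ C ‖h‖²` for all `x, h`. -/
def Semiconcave {n : ℕ} (f : Euc n → ℝ) (C : ℝ) : Prop :=
  ∀ x h : Euc n, f (x + h) + f (x - h) - 2 * f x ≤ C * ‖h‖ ^ 2

/-- The smallest eigenvalue of `A`, characterized as `inf_{‖p‖=1} ⟨A p, p⟩`. -/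
def lamMin {n : ℕ} (A : Matrix (Fin n) (Fin n) ℝ) : ℝ :=
  ⨅ p : {p : Euc n // ‖p‖ = 1}, quadA A p.1

/-- The largest eigenvalue of `A`, characterized as `sup_{‖p‖=1} ⟨A p, p⟩`. -/
def lamMax {n : ℕ} (A : Matrix (Fin n) (Fin n) ℝ) : ℝ :=
  ⨆ p : {p : Euc n // ‖p‖ = 1}, quadA A p.1

lemma exists_subgradient {E : Type*} [NormedAddCommGroup E] [InnerProductSpace ℝ E]
    [CompleteSpace E] {f : E → ℝ} (hf : Continuous f) (hc : ConvexOn ℝ Set.univ f) (x : E) :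
    ∃ p : E, ∀ z, f x + ⟪p, z - x⟫ ≤ f z := by
  set S : Set (E × ℝ) := {p | f p.1 < p.2} with hS
  have hSopen : IsOpen S := isOpen_lt (hf.comp continuous_fst) continuous_snd
  have hSconv : Convex ℝ S := by
    intro p hp q hq a b ha hb hab
    simp only [hS, Set.mem_setOf_eq] at *
    have h2 := hc.2 (Set.mem_univ p.1) (Set.mem_univ q.1) ha hb hab
    have : a * f p.1 + b * f q.1 < a * p.2 + b * q.2 := by
      rcases ha.lt_or_eq with ha' | ha'
      · have := mul_lt_mul_of_pos_left hp ha'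
        have := mul_le_mul_of_nonneg_left hq.le hb
        linarith
      · have hb' : 0 < b := by rw [← ha', zero_add] at hab; linarith
        have := mul_lt_mul_of_pos_left hq hb'
        have := mul_le_mul_of_nonneg_left hp.le ha
        linarith
    calc f (a • p + b • q).1 = f (a • p.1 + b • q.1) := rfl
      _ ≤ a * f p.1 + b * f q.1 := by simpa using h2
      _ < a * p.2 + b * q.2 := this
      _ = (a • p + b • q).2 := by simp
  have hx : (x, f x) ∉ S := by simp [hS]
  obtain ⟨φ, hφ⟩ := geometric_hahn_banach_open_point hSconv hSopen hx
  set g : E →L[ℝ] ℝ := φ.comp (ContinuousLinearMap.inl ℝ E ℝ) with hg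
  set c : ℝ := φ (0, 1) with hcdef
  have hφ' : ∀ z t, φ (z, t) = g z + t * c := by
    intro z t
    have h0 : (z, t) = (z, 0) + t • ((0 : E), (1 : ℝ)) := by simp
    rw [h0, map_add, map_smul]
    simp only [hg, hcdef, ContinuousLinearMap.comp_apply, ContinuousLinearMap.inl_apply,
      smul_eq_mul]
  have key : ∀ z t, f z < t → g z + t * c < g x + f x * c := by
    intro z t ht
    have := hφ (z, t) (by simpa [hS] using ht)
    rwa [hφ' z t, hφ' x (f x)] at this
  have hcneg : c < 0 := by
    rcases lt_trichotomy c 0 with h | h | h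
    · exact h
    · exfalso
      have := key x (f x + 1) (by linarith)
      rw [h] at this; simp at this
    · exfalso
      have h1 := key x (f x + 1) (by linarith)
      nlinarith
  have hcpos : 0 < -c := by linarith
  have hle : ∀ z, g z + f z * c ≤ g x + f x * c := by
    intro z
    refine le_of_forall_pos_le_add fun ε hε => ?_
    have hd : 0 < ε / (-c) := div_pos hε hcpos
    have := key z (f z + ε / (-c)) (by linarith)
    have h2 : (ε / (-c)) * c = -ε := by field_simp [hcneg.ne]
    nlinarith
  refine ⟨(-c)⁻¹ • (InnerProductSpace.toDual ℝ E).symm g, fun z => ?_⟩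
  have hin : ⟪(-c)⁻¹ • (InnerProductSpace.toDual ℝ E).symm g, z - x⟫ = (-c)⁻¹ * (g z - g x) := by
    rw [real_inner_smul_left, InnerProductSpace.toDual_symm_apply]
    simp [map_sub]
  rw [hin]
  have h := hle z
  have hinv : (0:ℝ) < (-c)⁻¹ := inv_pos.2 hcpos
  have h3 : g z - g x ≤ (f z - f x) * (-c) := by nlinarith
  have h4 := mul_le_mul_of_nonneg_left h3 hinv.le
  have h5 : (-c)⁻¹ * ((f z - f x) * (-c)) = f z - f x := by field_simp [hcneg.ne]
  linarith



lemma aux_one_dim {g : ℝ → ℝ} (hgc : Continuous g) (hg0 : g 0 = 0) (hg1 : g 1 = 0)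
    (hgmid : ∀ r r' : ℝ, g ((r + r') / 2) ≤ (g r + g r') / 2) :
    ∀ r ∈ Set.Icc (0:ℝ) 1, g r ≤ 0 := by
  obtain ⟨r₀, hr₀, hM⟩ := isCompact_Icc.exists_isMaxOn (Set.nonempty_Icc.2 zero_le_one)
    hgc.continuousOn
  have hM' : ∀ r ∈ Set.Icc (0:ℝ) 1, g r ≤ g r₀ := fun r hr => hM hr
  intro r hr
  refine (hM' r hr).trans ?_
  obtain ⟨hr₀0, hr₀1⟩ := hr₀
  rcases min_cases r₀ (1 - r₀) with ⟨he, hle⟩ | ⟨he, hle⟩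
  · -- d = r₀, r₀ - d = 0
    have h1 : r₀ + r₀ ∈ Set.Icc (0:ℝ) 1 := ⟨by linarith, by linarith⟩
    have hmid := hgmid (r₀ + r₀) (r₀ - r₀)
    have he2 : (r₀ + r₀ + (r₀ - r₀)) / 2 = r₀ := by ring
    rw [he2] at hmid
    have h3 : g (r₀ - r₀) = 0 := by simpa using hg0
    have h4 := hM' _ h1
    linarith
  · have h1 : r₀ - (1 - r₀) ∈ Set.Icc (0:ℝ) 1 := ⟨by linarith, by linarith⟩
    have hmid := hgmid (r₀ + (1 - r₀)) (r₀ - (1 - r₀))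
    have he2 : (r₀ + (1 - r₀) + (r₀ - (1 - r₀))) / 2 = r₀ := by ring
    rw [he2] at hmid
    have h3 : g (r₀ + (1 - r₀)) = 0 := by simpa using hg1
    have h4 := hM' _ h1
    linarith

lemma convexOn_of_midpoint {E : Type*} [NormedAddCommGroup E] [NormedSpace ℝ E]
    {f : E → ℝ} (hf : Continuous f)
    (h : ∀ a b : E, f ((1/2 : ℝ) • (a + b)) ≤ (f a + f b) / 2) :
    ConvexOn ℝ Set.univ f := by
  refine ⟨convex_univ, fun a _ b _ s t hs ht hst => ?_⟩
  have hgc : Continuous (fun r : ℝ => f (a + r • (b - a)) - (f a + r * (f b - f a))) := by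
    apply Continuous.sub
    · exact hf.comp (continuous_const.add (continuous_id.smul continuous_const))
    · continuity
  have hg0 : f (a + (0:ℝ) • (b - a)) - (f a + 0 * (f b - f a)) = 0 := by simp
  have hg1 : f (a + (1:ℝ) • (b - a)) - (f a + 1 * (f b - f a)) = 0 := by simp
  have hgmid : ∀ r r' : ℝ, f (a + ((r + r')/2) • (b - a)) - (f a + ((r + r')/2) * (f b - f a))
      ≤ ((f (a + r • (b - a)) - (f a + r * (f b - f a)))
        + (f (a + r' • (b - a)) - (f a + r' * (f b - f a)))) / 2 := by
    intro r r'
    have hpt : a + ((r + r') / 2) • (b - a) =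
        (1/2 : ℝ) • ((a + r • (b - a)) + (a + r' • (b - a))) := by
      match_scalars <;> ring
    have := h (a + r • (b - a)) (a + r' • (b - a))
    rw [← hpt] at this
    linarith
  have hmax := aux_one_dim hgc hg0 hg1 hgmid t ⟨ht, by linarith⟩
  have hteq : s = 1 - t := by linarith
  subst hteq
  have hpt : (1 - t) • a + t • b = a + t • (b - a) := by
    match_scalars <;> ring
  rw [hpt, smul_eq_mul, smul_eq_mul]
  linarith

lemma quadA_pos {n : ℕ} {A : Matrix (Fin n) (Fin n) ℝ} (hA : A.PosDef) {q : Euc n} (hq : q ≠ 0) :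
    0 < quadA A q := by
  have h := hA.dotProduct_mulVec_pos (x := (WithLp.equiv 2 _) q) (by simpa using hq)
  simpa [quadA, Matrix.toEuclideanLin_apply, PiLp.inner_apply, dotProduct, mul_comm] using h

lemma quadA_nonneg {n : ℕ} {A : Matrix (Fin n) (Fin n) ℝ} (hA : A.PosDef) (q : Euc n) :
    0 ≤ quadA A q := by
  rcases eq_or_ne q 0 with h | h
  · simp [h, quadA]
  · exact (quadA_pos hA h).le

lemma quadA_sym {n : ℕ} {A : Matrix (Fin n) (Fin n) ℝ} (hA : A.IsHermitian) (u v : Euc n) :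
    ⟪Matrix.toEuclideanLin A u, v⟫ = ⟪u, Matrix.toEuclideanLin A v⟫ :=
  (Matrix.isHermitian_iff_isSymmetric.1 hA) u v

lemma bddAbove_quad {n : ℕ} (A : Matrix (Fin n) (Fin n) ℝ) :
    BddAbove (Set.range fun p : {p : Euc n // ‖p‖ = 1} => quadA A p.1) := by
  set f := LinearMap.toContinuousLinearMap (Matrix.toEuclideanLin A)
  refine ⟨‖f‖, ?_⟩
  rintro - ⟨p, rfl⟩
  have h1 : quadA A p.1 ≤ ‖f p.1‖ * ‖p.1‖ := by
    have := real_inner_le_norm (Matrix.toEuclideanLin A p.1) p.1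
    simpa [quadA, f] using this
  have h2 : ‖f p.1‖ ≤ ‖f‖ * ‖p.1‖ := f.le_opNorm p.1
  rw [p.2, mul_one] at h1 h2
  exact h1.trans h2

lemma quadA_le_lamMax {n : ℕ} (A : Matrix (Fin n) (Fin n) ℝ) (v : Euc n) :
    quadA A v ≤ lamMax A * ‖v‖ ^ 2 := by
  rcases eq_or_ne v 0 with h | h
  · simp [h, quadA]
  · have hv : (0:ℝ) < ‖v‖ := norm_pos_iff.2 h
    set p : Euc n := ‖v‖⁻¹ • v with hp
    have hpn : ‖p‖ = 1 := by
      rw [hp, norm_smul]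
      simp [abs_of_pos (inv_pos.2 hv), inv_mul_cancel₀ hv.ne']
    have hq : quadA A v = ‖v‖ ^ 2 * quadA A p := by
      rw [hp]
      simp only [quadA, map_smul, real_inner_smul_left, real_inner_smul_right]
      field_simp
    have hle : quadA A p ≤ lamMax A := le_ciSup (bddAbove_quad A) ⟨p, hpn⟩
    rw [hq]
    calc ‖v‖ ^ 2 * quadA A p ≤ ‖v‖ ^ 2 * lamMax A := by
          apply mul_le_mul_of_nonneg_left hle (by positivity)
      _ = lamMax A * ‖v‖ ^ 2 := by ring

lemma lamMax_pos {n : ℕ} (hn : 0 < n) {A : Matrix (Fin n) (Fin n) ℝ} (hA : A.PosDef) :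
    0 < lamMax A := by
  set p0 : Euc n := EuclideanSpace.single ⟨0, hn⟩ (1:ℝ) with hp0
  have hn0 : ‖p0‖ = 1 := by simp [hp0]
  have hne : p0 ≠ 0 := by
    intro h; rw [h] at hn0; simp at hn0
  have := quadA_pos hA hne
  exact this.trans_le (le_ciSup (bddAbove_quad A) ⟨p0, hn0⟩)

lemma cauchy_schwarz_quad {n : ℕ} {A : Matrix (Fin n) (Fin n) ℝ} (hA : A.PosDef) (u v : Euc n) :
    ⟪Matrix.toEuclideanLin A u, v⟫ ^ 2 ≤ quadA A u * quadA A v := by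
  set B := Matrix.toEuclideanLin A
  have key : ∀ t : ℝ, 0 ≤ quadA A u * (t * t) + (2 * ⟪B u, v⟫) * t + quadA A v := by
    intro t
    have h0 : (0:ℝ) ≤ quadA A (t • u + v) := quadA_nonneg hA _
    have hexp : quadA A (t • u + v) =
        quadA A u * (t * t) + (2 * ⟪B u, v⟫) * t + quadA A v := by
      simp only [quadA, map_add, map_smul, inner_add_left, inner_add_right,
        real_inner_smul_left, real_inner_smul_right]
      have hsym : ⟪B v, u⟫ = ⟪B u, v⟫ := by
        rw [quadA_sym hA.1 v u, real_inner_comm]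
      rw [hsym]; ring
    linarith [hexp ▸ h0]
  have := discrim_le_zero key
  rw [discrim] at this
  nlinarith [this]

lemma norm_sq_le_lamMax_quad_inv {n : ℕ} {A : Matrix (Fin n) (Fin n) ℝ} (hA : A.PosDef)
    (w : Euc n) : ‖w‖ ^ 2 ≤ lamMax A * quadA A⁻¹ w := by
  rcases eq_or_ne w 0 with h | h
  · simp [h, quadA]
  · set v : Euc n := Matrix.toEuclideanLin A⁻¹ w with hv
    have hd : IsUnit A.det := isUnit_iff_ne_zero.2 (ne_of_gt hA.det_pos)
    have hw : Matrix.toEuclideanLin A v = w := by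
      rw [hv]
      simp [Matrix.toEuclideanLin_apply, Matrix.mulVec_mulVec, Matrix.mul_nonsing_inv A hd]
    have hq1 : quadA A⁻¹ w = quadA A v := by
      rw [quadA, ← hv, quadA, ← hw]
      exact real_inner_comm _ _
    have hnormsq : ‖w‖ ^ 2 = ⟪Matrix.toEuclideanLin A v, w⟫ := by
      rw [hw, real_inner_self_eq_norm_sq]
    have hcs := cauchy_schwarz_quad hA v w
    have hquadw := quadA_le_lamMax A w
    have hqvnn : 0 ≤ quadA A v := quadA_nonneg hA v
    have hw0 : (0:ℝ) < ‖w‖ := norm_pos_iff.2 h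
    have hwpos : (0:ℝ) < ‖w‖ ^ 2 := by positivity
    rw [hq1]
    nlinarith [hcs, hquadw, hqvnn, hwpos, hnormsq]


/-- If `u_T` is semiconcave with linear modulus and constant
`1/(T·λₙ(A))`, then `I_T(u_T)` is nonempty. -/
theorem semiconcave_implies_reachable
    {n : ℕ} (hn : 0 < n) (T : ℝ) (hT : 0 < T)
    (A : Matrix (Fin n) (Fin n) ℝ) (hA : A.PosDef)
    (uT : Euc n → ℝ) (huT : IsLip uT)
    (hsc : Semiconcave uT (1 / (T * lamMax A))) :
    ∃ u0 : Euc n → ℝ, IsLip u0 ∧ SplusQ T A u0 = uT := by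
  obtain ⟨K, hK⟩ := huT
  set L : ℝ := (K : ℝ) with hL
  have hL0 : (0:ℝ) ≤ L := K.2
  have hlam : 0 < lamMax A := lamMax_pos hn hA
  set C : ℝ := 1 / (T * lamMax A) with hC
  have hC0 : 0 < C := by rw [hC]; positivity
  have hAinv : A⁻¹.PosDef := hA.inv
  have hdet : IsUnit A.det := isUnit_iff_ne_zero.2 (ne_of_gt hA.det_pos)
  set Q : Euc n → ℝ := fun w => quadA A⁻¹ w / (2 * T) with hQ
  have hQ0 : Q 0 = 0 := by simp [hQ, quadA]
  have hkey : ∀ w : Euc n, C / 2 * ‖w‖ ^ 2 ≤ Q w := by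
    intro w
    have h1 := norm_sq_le_lamMax_quad_inv hA w
    have h4 : C * T * ‖w‖ ^ 2 ≤ C * T * (lamMax A * quadA A⁻¹ w) :=
      mul_le_mul_of_nonneg_left h1 (by positivity)
    have h5 : C * T * (lamMax A * quadA A⁻¹ w) = quadA A⁻¹ w := by
      rw [hC]; field_simp
    show C / 2 * ‖w‖ ^ 2 ≤ quadA A⁻¹ w / (2 * T)
    rw [le_div_iff₀ (by positivity : (0:ℝ) < 2 * T)]
    nlinarith [h4, h5]
  have hQnn : ∀ w, 0 ≤ Q w := fun w => div_nonneg (quadA_nonneg hAinv w) (by positivity)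
  have hlip : ∀ a b : Euc n, uT a ≤ uT b + L * ‖a - b‖ := by
    intro a b
    have h1 := hK.dist_le_mul a b
    rw [Real.dist_eq, dist_eq_norm] at h1
    have := abs_le.1 h1
    linarith [this.2]
  -- φ convex
  have hφc : Continuous (fun z : Euc n => C / 2 * ‖z‖ ^ 2 - uT z) :=
    (continuous_const.mul (continuous_norm.pow 2)).sub hK.continuous
  have hφconv : ConvexOn ℝ Set.univ (fun z : Euc n => C / 2 * ‖z‖ ^ 2 - uT z) := by
    apply convexOn_of_midpoint hφc
    intro a b
    set x : Euc n := (1/2 : ℝ) • (a + b) with hx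
    set h : Euc n := (1/2 : ℝ) • (a - b) with hh
    have hxa : x + h = a := by rw [hx, hh]; match_scalars <;> ring
    have hxb : x - h = b := by rw [hx, hh]; match_scalars <;> ring
    have hs := hsc x h
    rw [hxa, hxb] at hs
    have hna : ‖a‖ ^ 2 = ‖x‖ ^ 2 + 2 * ⟪x, h⟫ + ‖h‖ ^ 2 := by
      rw [← hxa]; exact norm_add_sq_real x h
    have hnb : ‖b‖ ^ 2 = ‖x‖ ^ 2 - 2 * ⟪x, h⟫ + ‖h‖ ^ 2 := by
      rw [← hxb]; exact norm_sub_sq_real x h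
    have hsum : ‖a‖ ^ 2 + ‖b‖ ^ 2 - 2 * ‖x‖ ^ 2 = 2 * ‖h‖ ^ 2 := by linarith
    have hCc : C / 2 * (‖a‖ ^ 2 + ‖b‖ ^ 2 - 2 * ‖x‖ ^ 2) = C * ‖h‖ ^ 2 := by
      rw [hsum]; ring
    linarith [hs, hCc]
  -- supergradient
  have hsuper : ∀ x : Euc n, ∃ q : Euc n, ∀ z, uT z ≤ uT x + ⟪q, z - x⟫ + C / 2 * ‖z - x‖ ^ 2 := by
    intro x
    obtain ⟨p, hp⟩ := exists_subgradient hφc hφconv x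
    refine ⟨C • x - p, fun z => ?_⟩
    have h1 := hp z
    have h2 : ‖z‖ ^ 2 = ‖x‖ ^ 2 + 2 * ⟪x, z - x⟫ + ‖z - x‖ ^ 2 := by
      calc ‖z‖ ^ 2 = ‖x + (z - x)‖ ^ 2 := by rw [show x + (z - x) = z by abel]
        _ = ‖x‖ ^ 2 + 2 * ⟪x, z - x⟫ + ‖z - x‖ ^ 2 := norm_add_sq_real x (z - x)
    have h3 : ⟪C • x - p, z - x⟫ = C * ⟪x, z - x⟫ - ⟪p, z - x⟫ := by
      rw [inner_sub_left, real_inner_smul_left]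
    have hCc2 : C / 2 * ‖z‖ ^ 2
        = C / 2 * ‖x‖ ^ 2 + C * ⟪x, z - x⟫ + C / 2 * ‖z - x‖ ^ 2 := by
      rw [h2]; ring
    rw [h3]
    linarith [h1, hCc2]
  -- quadratic expansion
  have hexpand : ∀ q w : Euc n, Q (w + T • Matrix.toEuclideanLin A q)
      = Q w + ⟪q, w⟫ + Q (T • Matrix.toEuclideanLin A q) := by
    intro q w
    set d : Euc n := T • Matrix.toEuclideanLin A q with hd
    have hBd : Matrix.toEuclideanLin A⁻¹ d = T • q := by
      rw [hd, map_smul]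
      congr 1
      simp [Matrix.toEuclideanLin_apply, Matrix.mulVec_mulVec, Matrix.nonsing_inv_mul A hdet]
    have hsym : ⟪Matrix.toEuclideanLin A⁻¹ w, d⟫ = T * ⟪q, w⟫ := by
      rw [quadA_sym hAinv.1 w d, hBd, real_inner_smul_right, real_inner_comm]
    have hsym2 : ⟪Matrix.toEuclideanLin A⁻¹ d, w⟫ = T * ⟪q, w⟫ := by
      rw [hBd, real_inner_smul_left]
    have hq1 : quadA A⁻¹ (w + d)
        = quadA A⁻¹ w + 2 * (T * ⟪q, w⟫) + quadA A⁻¹ d := by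
      simp only [quadA, map_add, inner_add_left, inner_add_right]
      rw [hsym, hsym2]; ring
    simp only [hQ]
    rw [hq1]
    field_simp
  -- building u0
  have hbddF : ∀ y : Euc n, BddAbove (Set.range fun z => uT z - Q (z - y)) := by
    intro y
    refine ⟨uT y + L ^ 2 / (2 * C), ?_⟩
    rintro - ⟨z, rfl⟩
    show uT z - Q (z - y) ≤ uT y + L ^ 2 / (2 * C)
    have h1 := hlip z y
    have h2 := hkey (z - y)
    have hCinv : C * (L ^ 2 / (2 * C)) = L ^ 2 / 2 := by field_simp
    nlinarith [sq_nonneg (L - C * ‖z - y‖), hC0, norm_nonneg (z - y), hCinv, h1, h2]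
  set u0 : Euc n → ℝ := fun y => ⨆ z : Euc n, (uT z - Q (z - y)) with hu0
  have h_ge : ∀ y z : Euc n, uT z - Q (z - y) ≤ u0 y := fun y z => le_ciSup (hbddF y) z
  have h_le : ∀ (y : Euc n) (c : ℝ), (∀ z, uT z - Q (z - y) ≤ c) → u0 y ≤ c :=
    fun y c h => ciSup_le h
  have hu0y : ∀ y, uT y ≤ u0 y := by
    intro y
    have := h_ge y y
    simpa [sub_self, hQ0] using this
  have hkeylip : ∀ a b : Euc n, u0 a ≤ u0 b + L * ‖a - b‖ := by
    intro a b
    apply h_le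
    intro z
    have h1 : uT z ≤ uT (z - a + b) + L * ‖a - b‖ := by
      have h0 := hlip z (z - a + b)
      rw [show z - (z - a + b) = a - b by abel] at h0
      exact h0
    have h2 : Q (z - a) = Q ((z - a + b) - b) := by
      rw [show (z - a + b) - b = z - a by abel]
    have h3 := h_ge b (z - a + b)
    linarith
  have hu0lip : LipschitzWith K u0 := by
    apply LipschitzWith.of_dist_le_mul
    intro y y'
    rw [Real.dist_eq, dist_eq_norm]
    rw [abs_sub_le_iff]
    constructor
    · have := hkeylip y y'
      linarith
    · have := hkeylip y' y
      rw [norm_sub_rev] at this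
      linarith
  refine ⟨u0, ⟨K, hu0lip⟩, ?_⟩
  funext x
  have hSval : SplusQ T A u0 x = ⨅ y : Euc n, (u0 y + Q (x - y)) := rfl
  have hbddI : BddBelow (Set.range fun y => u0 y + Q (x - y)) := by
    refine ⟨uT x - L ^ 2 / (2 * C), ?_⟩
    rintro - ⟨y, rfl⟩
    show uT x - L ^ 2 / (2 * C) ≤ u0 y + Q (x - y)
    have h1 := hlip x y
    have h2 := hkey (x - y)
    have h3 := hu0y y
    have hCinv : C * (L ^ 2 / (2 * C)) = L ^ 2 / 2 := by field_simp
    nlinarith [sq_nonneg (L - C * ‖x - y‖), hC0, norm_nonneg (x - y), hCinv, h1, h2, h3]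
  rw [hSval]
  apply le_antisymm
  · obtain ⟨q, hq⟩ := hsuper x
    set y0 : Euc n := x - T • Matrix.toEuclideanLin A q with hy0
    have hxy : x - y0 = T • Matrix.toEuclideanLin A q := by rw [hy0]; abel
    have hb : u0 y0 + Q (x - y0) ≤ uT x := by
      have hmain : u0 y0 ≤ uT x - Q (x - y0) := by
        apply h_le
        intro z
        have h1 := hq z
        have h2 : Q (z - y0) = Q (z - x) + ⟪q, z - x⟫ + Q (x - y0) := by
          rw [show z - y0 = (z - x) + T • Matrix.toEuclideanLin A q by rw [hy0]; abel,
            hexpand q (z - x), hxy]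
        have h3 := hkey (z - x)
        linarith
      linarith
    exact le_trans (ciInf_le hbddI y0) hb
  · apply le_ciInf
    intro y
    have := h_ge y x
    linarith
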